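/- Let E be a complex Banach space, let a < b be real numbers, and let Π : [a, b] → L(E) be continuous in operator norm with Π_t ∘ Π_t = Π_t for every t ∈ [a, b]. If the range of Π_a is finite-dimensional of dimension m, then for every t ∈ [a, b] the range of Π_t is finite-dimensional of dimension m. -/
import Mathlib

open ContinuousLinearMap

lemma range_equiv_of_close {E : Type*} [NormedAddCommGroup E] [NormedSpace ℂ E] [CompleteSpace E]
    (P Q : E →L[ℂ] E) (hP : P ∘L P = P) (hQ : Q ∘L Q = Q)
    (h : ‖Q - P‖ * ‖P + P - 1‖ < 1) :
    Nonempty ((LinearMap.range (Q : E →ₗ[ℂ] E)) ≃ₗ[ℂ] (LinearMap.range (P : E →ₗ[ℂ] E))) := by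
  have hP' : P * P = P := hP
  have hQ' : Q * Q = Q := hQ
  set W : E →L[ℂ] E := (P + P - 1) * (Q - P) with hWdef
  have hW : ‖-W‖ < 1 := by
    rw [norm_neg]
    calc ‖W‖ ≤ ‖P + P - 1‖ * ‖Q - P‖ := norm_mul_le _ _
    _ < 1 := by rwa [mul_comm]
  let u : (E →L[ℂ] E)ˣ := Units.oneSub (-W) hW
  have huv : (u : E →L[ℂ] E) = 1 + W := by
    show (1 : E →L[ℂ] E) - (-W) = 1 + W
    rw [sub_neg_eq_add]
  have hint : (u : E →L[ℂ] E) * Q = P * (u : E →L[ℂ] E) := by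
    rw [huv, hWdef]
    have hPQQ : P * Q * Q = P * Q := by rw [mul_assoc, hQ']
    simp only [mul_add, add_mul, mul_sub, sub_mul, ← mul_assoc, hP', hQ', hPQQ, one_mul, mul_one]
    abel
  -- the linear equiv E ≃ E given by u
  let e : E ≃ₗ[ℂ] E := LinearEquiv.ofLinear ((u : E →L[ℂ] E) : E →ₗ[ℂ] E)
    (((u⁻¹ : (E →L[ℂ] E)ˣ) : E →L[ℂ] E) : E →ₗ[ℂ] E)
    (by ext x; exact DFunLike.congr_fun (u.mul_inv) x)
    (by ext x; exact DFunLike.congr_fun (u.inv_mul) x)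
  have hmap : Submodule.map (e : E →ₗ[ℂ] E) (LinearMap.range (Q : E →ₗ[ℂ] E))
      = LinearMap.range (P : E →ₗ[ℂ] E) := by
    have h1 : (e : E →ₗ[ℂ] E) ∘ₗ (Q : E →ₗ[ℂ] E) = (P : E →ₗ[ℂ] E) ∘ₗ (e : E →ₗ[ℂ] E) := by
      have := congrArg (ContinuousLinearMap.toLinearMap) hint
      exact this
    calc Submodule.map (e : E →ₗ[ℂ] E) (LinearMap.range (Q : E →ₗ[ℂ] E))
        = LinearMap.range ((e : E →ₗ[ℂ] E) ∘ₗ (Q : E →ₗ[ℂ] E)) := (LinearMap.range_comp _ _).symm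
      _ = LinearMap.range ((P : E →ₗ[ℂ] E) ∘ₗ (e : E →ₗ[ℂ] E)) := by rw [h1]
      _ = Submodule.map (P : E →ₗ[ℂ] E) (LinearMap.range (e : E →ₗ[ℂ] E)) := LinearMap.range_comp _ _
      _ = Submodule.map (P : E →ₗ[ℂ] E) ⊤ := by rw [LinearEquiv.range]
      _ = LinearMap.range (P : E →ₗ[ℂ] E) := Submodule.map_top _
  exact ⟨(e.submoduleMap (LinearMap.range (Q : E →ₗ[ℂ] E))).trans (LinearEquiv.ofEq _ _ hmap)⟩

/-- along a norm-continuous family of projections on a Banach space,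
the rank is constant (used in Sections 5–6 of the paper for the Riesz projections
`Π_{tV}` as the potential perturbation is switched on). -/
theorem stmt_11
    {E : Type*} [NormedAddCommGroup E] [NormedSpace ℂ E] [CompleteSpace E]
    (a b : ℝ) (hab : a < b)
    (Pr : ℝ → (E →L[ℂ] E))
    (hcont : ContinuousOn Pr (Set.Icc a b))
    (hproj : ∀ t ∈ Set.Icc a b, Pr t ∘L Pr t = Pr t)
    (m : ℕ)
    (hfin : FiniteDimensional ℂ (LinearMap.range (Pr a : E →ₗ[ℂ] E)))
    (hrank : Module.finrank ℂ (LinearMap.range (Pr a : E →ₗ[ℂ] E)) = m) :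
    ∀ t ∈ Set.Icc a b,
      FiniteDimensional ℂ (LinearMap.range (Pr t : E →ₗ[ℂ] E)) ∧
        Module.finrank ℂ (LinearMap.range (Pr t : E →ₗ[ℂ] E)) = m := by
  -- local comparison of ranges
  have local_iso : ∀ t ∈ Set.Icc a b, ∃ ε > 0, ∀ s ∈ Set.Icc a b, dist s t < ε →
      Nonempty ((LinearMap.range (Pr s : E →ₗ[ℂ] E)) ≃ₗ[ℂ]
        (LinearMap.range (Pr t : E →ₗ[ℂ] E))) := by
    intro t ht
    set c := ‖Pr t + Pr t - 1‖ with hc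
    have hc1 : (0 : ℝ) < c + 1 := by positivity
    obtain ⟨δ, hδ, hδ'⟩ := Metric.continuousWithinAt_iff.mp (hcont t ht) (1 / (c + 1))
      (by positivity)
    refine ⟨δ, hδ, fun s hs hst => ?_⟩
    apply range_equiv_of_close (Pr t) (Pr s) (hproj t ht) (hproj s hs)
    have h1 : ‖Pr s - Pr t‖ < 1 / (c + 1) := by
      have := hδ' hs hst
      rwa [dist_eq_norm] at this
    have h2 : ‖Pr s - Pr t‖ * c ≤ ‖Pr s - Pr t‖ * (c + 1) := by
      apply mul_le_mul_of_nonneg_left (by linarith) (norm_nonneg _)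
    calc ‖Pr s - Pr t‖ * c ≤ ‖Pr s - Pr t‖ * (c + 1) := h2
      _ < (1 / (c + 1)) * (c + 1) := by
          apply mul_lt_mul_of_pos_right h1 hc1
      _ = 1 := by field_simp
  choose! ε hεpos hloc using local_iso
  -- the predicate "range isomorphic to range at a"
  set p : ℝ → Prop := fun t => Nonempty ((LinearMap.range (Pr t : E →ₗ[ℂ] E)) ≃ₗ[ℂ]
    (LinearMap.range (Pr a : E →ₗ[ℂ] E))) with hp
  have hpa : p a := ⟨LinearEquiv.refl _ _⟩
  have key : ∀ t ∈ Set.Icc a b, p t := by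
    intro t ht
    by_contra hpt
    set U : Set ℝ := ⋃ x ∈ {x | x ∈ Set.Icc a b ∧ p x}, Metric.ball x (ε x) with hU
    set V : Set ℝ := ⋃ x ∈ {x | x ∈ Set.Icc a b ∧ ¬ p x}, Metric.ball x (ε x) with hV
    have hUopen : IsOpen U := isOpen_biUnion (fun _ _ => Metric.isOpen_ball)
    have hVopen : IsOpen V := isOpen_biUnion (fun _ _ => Metric.isOpen_ball)
    have hcover : Set.Icc a b ⊆ U ∪ V := by
      intro s hs
      by_cases hps : p s
      · exact Or.inl (Set.mem_biUnion ⟨hs, hps⟩ (Metric.mem_ball_self (hεpos s hs)))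
      · exact Or.inr (Set.mem_biUnion ⟨hs, hps⟩ (Metric.mem_ball_self (hεpos s hs)))
    have hUsub : ∀ s ∈ Set.Icc a b ∩ U, p s := by
      rintro s ⟨hs, hsU⟩
      obtain ⟨x, ⟨hx, hpx⟩, hball⟩ := Set.mem_iUnion₂.mp hsU
      obtain ⟨e1⟩ := hloc x hx s hs (Metric.mem_ball.mp hball)
      obtain ⟨e2⟩ := hpx
      exact ⟨e1.trans e2⟩
    have hVsub : ∀ s ∈ Set.Icc a b ∩ V, ¬ p s := by
      rintro s ⟨hs, hsV⟩ hps
      obtain ⟨x, ⟨hx, hpx⟩, hball⟩ := Set.mem_iUnion₂.mp hsV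
      obtain ⟨e1⟩ := hloc x hx s hs (Metric.mem_ball.mp hball)
      obtain ⟨e2⟩ := hps
      exact hpx ⟨e1.symm.trans e2⟩
    have hne1 : (Set.Icc a b ∩ U).Nonempty := by
      refine ⟨a, Set.left_mem_Icc.mpr hab.le, ?_⟩
      exact Set.mem_biUnion ⟨Set.left_mem_Icc.mpr hab.le, hpa⟩
        (Metric.mem_ball_self (hεpos a (Set.left_mem_Icc.mpr hab.le)))
    have hne2 : (Set.Icc a b ∩ V).Nonempty := by
      refine ⟨t, ht, ?_⟩
      exact Set.mem_biUnion ⟨ht, hpt⟩ (Metric.mem_ball_self (hεpos t ht))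
    obtain ⟨s, hs⟩ := isPreconnected_Icc U V hUopen hVopen hcover hne1 hne2
    exact hVsub s ⟨hs.1, hs.2.2⟩ (hUsub s ⟨hs.1, hs.2.1⟩)
  intro t ht
  obtain ⟨e⟩ := key t ht
  have hfd : FiniteDimensional ℂ (LinearMap.range (Pr t : E →ₗ[ℂ] E)) :=
    LinearEquiv.finiteDimensional e.symm
  exact ⟨hfd, by rw [e.finrank_eq, hrank]⟩
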